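/- Suppose ψ₀ ∈ S(ℝ², ℂ) satisfies a⁻ψ₀ = 0. Then for every natural number n, H((a⁺)ⁿψ₀) = (n + 1/2)·(a⁺)ⁿψ₀, where (a⁺)ⁿ denotes the n-fold iterate of a⁺. -/

import Mathlib

open MeasureTheory Complex
open scoped ENNReal

noncomputable section

/-- `p_x = −i·ħ₀·∂_x`. -/
def pxOp (hb : ℝ) (f : ℝ × ℝ → ℂ) : ℝ × ℝ → ℂ := fun p =>
  -Complex.I * hb * fderiv ℝ f p (1, 0)

/-- `p_y = −i·ħ₀·∂_y`. -/
def pyOp (hb : ℝ) (f : ℝ × ℝ → ℂ) : ℝ × ℝ → ℂ := fun p =>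
  -Complex.I * hb * fderiv ℝ f p (0, 1)

/-- `Π_x = ((1−r)ħ₀B₀/(ħ₀−rθ₀B₀))·y + (((r+s−rs)θ₀B₀−ħ₀)/(rθ₀B₀−ħ₀))·p_x`. -/
def PixOp (hb th B r s : ℝ) (f : ℝ × ℝ → ℂ) : ℝ × ℝ → ℂ := fun p =>
  ((1 - r) * hb * B / (hb - r * th * B)) * p.2 * f p +
    (((r + s - r * s) * th * B - hb) / (r * th * B - hb)) * pxOp hb f p

/-- `Π_y = −rB₀·x + (1 + r(s−1)θ₀B₀/ħ₀)·p_y`. -/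
def PiyOp (hb th B r s : ℝ) (f : ℝ × ℝ → ℂ) : ℝ × ℝ → ℂ := fun p =>
  -(r * B) * p.1 * f p + (1 + r * (s - 1) * th * B / hb) * pyOp hb f p

/-- `Π̃_x = Π_x / √(ħ₀B₀)`. -/
def PixT (hb th B r s : ℝ) (f : ℝ × ℝ → ℂ) : ℝ × ℝ → ℂ := fun p =>
  (Real.sqrt (hb * B))⁻¹ * PixOp hb th B r s f p

/-- `Π̃_y = Π_y / √(ħ₀B₀)`. -/
def PiyT (hb th B r s : ℝ) (f : ℝ × ℝ → ℂ) : ℝ × ℝ → ℂ := fun p =>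
  (Real.sqrt (hb * B))⁻¹ * PiyOp hb th B r s f p

/-- `a⁻ = (Π̃_x + i Π̃_y)/√2`. -/
def aMinus (hb th B r s : ℝ) (f : ℝ × ℝ → ℂ) : ℝ × ℝ → ℂ := fun p =>
  (PixT hb th B r s f p + Complex.I * PiyT hb th B r s f p) / Real.sqrt 2

/-- `a⁺ = (Π̃_x − i Π̃_y)/√2`. -/
def aPlus (hb th B r s : ℝ) (f : ℝ × ℝ → ℂ) : ℝ × ℝ → ℂ := fun p =>
  (PixT hb th B r s f p - Complex.I * PiyT hb th B r s f p) / Real.sqrt 2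

/-- `H = ((Π̃_x)² + (Π̃_y)²)/2`. -/
def Hop (hb th B r s : ℝ) (f : ℝ × ℝ → ℂ) : ℝ × ℝ → ℂ := fun p =>
  (PixT hb th B r s (PixT hb th B r s f) p + PiyT hb th B r s (PiyT hb th B r s f) p) / 2

/-! ### Auxiliary machinery -/

open scoped ContDiff

/-- A general first-order operator `a·x + b·y + c·∂x + d·∂y`. -/
def Lop (a b c d : ℂ) (f : ℝ × ℝ → ℂ) : ℝ × ℝ → ℂ := fun p =>
  a * p.1 * f p + b * p.2 * f p + c * fderiv ℝ f p (1, 0) + d * fderiv ℝ f p (0, 1)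

lemma contDiff_c1 : ContDiff ℝ ∞ (fun p : ℝ × ℝ => (p.1 : ℂ)) :=
  Complex.ofRealCLM.contDiff.comp contDiff_fst

lemma contDiff_c2 : ContDiff ℝ ∞ (fun p : ℝ × ℝ => (p.2 : ℂ)) :=
  Complex.ofRealCLM.contDiff.comp contDiff_snd

lemma contDiff_dapply {f : ℝ × ℝ → ℂ} (hf : ContDiff ℝ ∞ f) (v : ℝ × ℝ) :
    ContDiff ℝ ∞ (fun p => fderiv ℝ f p v) :=
  (hf.fderiv_right (m := ∞) (by norm_num)).clm_apply contDiff_const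

lemma lop_contDiff {f : ℝ × ℝ → ℂ} (hf : ContDiff ℝ ∞ f) (a b c d : ℂ) :
    ContDiff ℝ ∞ (Lop a b c d f) := by
  unfold Lop
  exact ((((contDiff_const.mul contDiff_c1).mul hf).add
    ((contDiff_const.mul contDiff_c2).mul hf)).add
    (contDiff_const.mul (contDiff_dapply hf _))).add
    (contDiff_const.mul (contDiff_dapply hf _))

lemma lop_fderiv {f : ℝ × ℝ → ℂ} (hf : ContDiff ℝ ∞ f) (a b c d : ℂ) (p v : ℝ × ℝ) :
    fderiv ℝ (Lop a b c d f) p v =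
      a * v.1 * f p + a * p.1 * fderiv ℝ f p v +
      b * v.2 * f p + b * p.2 * fderiv ℝ f p v +
      c * fderiv ℝ (fderiv ℝ f) p v (1, 0) + d * fderiv ℝ (fderiv ℝ f) p v (0, 1) := by
  have hdf : HasFDerivAt f (fderiv ℝ f p) p :=
    (hf.differentiable (by simp) p).hasFDerivAt
  have hdf' : HasFDerivAt (fderiv ℝ f) (fderiv ℝ (fderiv ℝ f) p) p :=
    ((hf.fderiv_right (m := ∞) (by norm_num)).differentiable
      (by simp) p).hasFDerivAt
  have hx : HasFDerivAt (fun q : ℝ × ℝ => (q.1 : ℂ))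
      (Complex.ofRealCLM.comp (ContinuousLinearMap.fst ℝ ℝ ℝ)) p :=
    Complex.ofRealCLM.hasFDerivAt.comp p hasFDerivAt_fst
  have hy : HasFDerivAt (fun q : ℝ × ℝ => (q.2 : ℂ))
      (Complex.ofRealCLM.comp (ContinuousLinearMap.snd ℝ ℝ ℝ)) p :=
    Complex.ofRealCLM.hasFDerivAt.comp p hasFDerivAt_snd
  have h1 := ((hx.const_mul a).mul hdf)
  have h2 := ((hy.const_mul b).mul hdf)
  have h3 := (hdf'.clm_apply (hasFDerivAt_const ((1, 0) : ℝ × ℝ) p)).const_mul c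
  have h4 := (hdf'.clm_apply (hasFDerivAt_const ((0, 1) : ℝ × ℝ) p)).const_mul d
  have H : HasFDerivAt (Lop a b c d f) _ p := (((h1.add h2).add h3).add h4)
  rw [H.fderiv]
  simp [ContinuousLinearMap.add_apply, ContinuousLinearMap.smul_apply,
    ContinuousLinearMap.comp_apply, ContinuousLinearMap.flip_apply,
    ContinuousLinearMap.coe_fst', ContinuousLinearMap.coe_snd',
    Complex.ofRealCLM_apply, smul_eq_mul]
  ring

lemma sndSymm {f : ℝ × ℝ → ℂ} (hf : ContDiff ℝ ∞ f) (p v w : ℝ × ℝ) :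
    fderiv ℝ (fderiv ℝ f) p v w = fderiv ℝ (fderiv ℝ f) p w v :=
  (hf.contDiffAt.isSymmSndFDerivAt (by rw [minSmoothness_of_isRCLikeNormedField]; exact ENat.LEInfty.out)) v w

lemma lop_lop {f : ℝ × ℝ → ℂ} (hf : ContDiff ℝ ∞ f) (a b c d a' b' c' d' : ℂ) (p : ℝ × ℝ) :
    Lop a' b' c' d' (Lop a b c d f) p =
      a' * p.1 * (a * p.1 * f p + b * p.2 * f p
          + c * fderiv ℝ f p (1, 0) + d * fderiv ℝ f p (0, 1))
      + b' * p.2 * (a * p.1 * f p + b * p.2 * f p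
          + c * fderiv ℝ f p (1, 0) + d * fderiv ℝ f p (0, 1))
      + c' * (a * f p + a * p.1 * fderiv ℝ f p (1, 0) + b * p.2 * fderiv ℝ f p (1, 0)
          + c * fderiv ℝ (fderiv ℝ f) p (1, 0) (1, 0) + d * fderiv ℝ (fderiv ℝ f) p (1, 0) (0, 1))
      + d' * (b * f p + a * p.1 * fderiv ℝ f p (0, 1) + b * p.2 * fderiv ℝ f p (0, 1)
          + c * fderiv ℝ (fderiv ℝ f) p (0, 1) (1, 0) + d * fderiv ℝ (fderiv ℝ f) p (0, 1) (0, 1)) := by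
  have e1 := lop_fderiv hf a b c d p (1, 0)
  have e2 := lop_fderiv hf a b c d p (0, 1)
  show a' * p.1 * Lop a b c d f p + b' * p.2 * Lop a b c d f p
      + c' * fderiv ℝ (Lop a b c d f) p (1, 0) + d' * fderiv ℝ (Lop a b c d f) p (0, 1) = _
  rw [e1, e2]
  simp only [Lop]
  norm_num
  exact Or.inl (by ring)

/-- coefficient of `x` in `Π̃_y` -/
def cA (hb th B r s : ℝ) : ℂ := ((Real.sqrt (hb * B) : ℝ) : ℂ)⁻¹ * ((-(r * B) : ℝ) : ℂ)

/-- coefficient of `y` in `Π̃_x` -/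
def cB (hb th B r s : ℝ) : ℂ :=
  ((Real.sqrt (hb * B) : ℝ) : ℂ)⁻¹ * (((1 - r) * hb * B / (hb - r * th * B) : ℝ) : ℂ)

/-- coefficient of `∂x` in `Π̃_x` -/
def cC (hb th B r s : ℝ) : ℂ :=
  ((Real.sqrt (hb * B) : ℝ) : ℂ)⁻¹ *
    (((((r + s - r * s) * th * B - hb) / (r * th * B - hb) : ℝ)) : ℂ) * (-Complex.I * hb)

/-- coefficient of `∂y` in `Π̃_y` -/
def cD (hb th B r s : ℝ) : ℂ :=
  ((Real.sqrt (hb * B) : ℝ) : ℂ)⁻¹ *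
    (((1 + r * (s - 1) * th * B / hb : ℝ)) : ℂ) * (-Complex.I * hb)

lemma pixT_eq (hb th B r s : ℝ) (f : ℝ × ℝ → ℂ) :
    PixT hb th B r s f = Lop 0 (cB hb th B r s) (cC hb th B r s) 0 f := by
  funext p
  simp only [PixT, PixOp, pxOp, Lop, cB, cC]
  push_cast
  ring

lemma piyT_eq (hb th B r s : ℝ) (f : ℝ × ℝ → ℂ) :
    PiyT hb th B r s f = Lop (cA hb th B r s) 0 0 (cD hb th B r s) f := by
  funext p
  simp only [PiyT, PiyOp, pyOp, Lop, cA, cD]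
  push_cast
  ring

lemma aMinus_eq (hb th B r s : ℝ) (f : ℝ × ℝ → ℂ) :
    aMinus hb th B r s f =
      Lop (Complex.I * cA hb th B r s * ((Real.sqrt 2 : ℝ) : ℂ)⁻¹)
          (cB hb th B r s * ((Real.sqrt 2 : ℝ) : ℂ)⁻¹)
          (cC hb th B r s * ((Real.sqrt 2 : ℝ) : ℂ)⁻¹)
          (Complex.I * cD hb th B r s * ((Real.sqrt 2 : ℝ) : ℂ)⁻¹) f := by
  funext p
  simp only [aMinus, PixT, PiyT, PixOp, PiyOp, pxOp, pyOp, Lop, cA, cB, cC, cD]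
  push_cast
  ring

lemma aPlus_eq (hb th B r s : ℝ) (f : ℝ × ℝ → ℂ) :
    aPlus hb th B r s f =
      Lop (-(Complex.I * cA hb th B r s * ((Real.sqrt 2 : ℝ) : ℂ)⁻¹))
          (cB hb th B r s * ((Real.sqrt 2 : ℝ) : ℂ)⁻¹)
          (cC hb th B r s * ((Real.sqrt 2 : ℝ) : ℂ)⁻¹)
          (-(Complex.I * cD hb th B r s * ((Real.sqrt 2 : ℝ) : ℂ)⁻¹)) f := by
  funext p
  simp only [aPlus, PixT, PiyT, PixOp, PiyOp, pxOp, pyOp, Lop, cA, cB, cC, cD]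
  push_cast
  ring

lemma key1 (hb th B r s : ℝ) (hhb : hb ≠ 0) (hB : B ≠ 0)
    (hrs : r * th * B ≠ hb) (hpos : 0 < hb * B) :
    cC hb th B r s * cA hb th B r s - cD hb th B r s * cB hb th B r s = Complex.I := by
  have h1 : hb - r * th * B ≠ 0 := sub_ne_zero.mpr (Ne.symm hrs)
  have h2 : r * th * B - hb ≠ 0 := sub_ne_zero.mpr hrs
  have hreal : ((1 - r) * hb * B / (hb - r * th * B)) * (1 + r * (s - 1) * th * B / hb)
      - (((r + s - r * s) * th * B - hb) / (r * th * B - hb)) * (-(r * B)) = B := by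
    have e : r * th * B - hb = -(hb - r * th * B) := by ring
    rw [e]
    field_simp
    linear_combination mul_inv_cancel₀ h1
  have hk : (Real.sqrt (hb * B))⁻¹ ^ 2 * (hb * B) = 1 := by
    rw [inv_pow, Real.sq_sqrt hpos.le]
    exact inv_mul_cancel₀ (ne_of_gt hpos)
  have hrealC : ((1 - (r : ℂ)) * hb * B / (hb - r * th * B)) * (1 + r * (s - 1) * th * B / hb)
      - (((r + s - r * s) * th * B - hb) / (r * th * B - hb)) * (-(r * B)) = (B : ℂ) := by
    exact_mod_cast hreal
  have hkC : (((Real.sqrt (hb * B) : ℝ)) : ℂ)⁻¹ ^ 2 * ((hb : ℂ) * B) = 1 := by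
    exact_mod_cast hk
  simp only [cA, cB, cC, cD]
  push_cast
  linear_combination (Complex.I * (hb : ℂ) * (((Real.sqrt (hb * B) : ℝ)) : ℂ)⁻¹ ^ 2) * hrealC
    + Complex.I * hkC

set_option maxHeartbeats 1000000 in
theorem stmt13 (hb th B r s : ℝ) (hhb : hb ≠ 0) (hth : th ≠ 0) (hB : B ≠ 0)
    (hnd : hb - th * B ≠ 0) (hrs : r * th * B ≠ hb) (hpos : 0 < hb * B)
    (ψ₀ : SchwartzMap (ℝ × ℝ) ℂ)
    (hground : aMinus hb th B r s ⇑ψ₀ = 0) :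
    ∀ n : ℕ,
      Hop hb th B r s ((aPlus hb th B r s)^[n] ⇑ψ₀) =
        ((n : ℂ) + 1 / 2) • (aPlus hb th B r s)^[n] ⇑ψ₀ := by
  have hc1 := key1 hb th B r s hhb hB hrs hpos
  have hw0 : ((Real.sqrt 2 : ℝ) : ℂ) ≠ 0 := by
    have : Real.sqrt 2 ≠ 0 := ne_of_gt (Real.sqrt_pos.mpr (by norm_num))
    exact_mod_cast this
  have hw2 : ((Real.sqrt 2 : ℝ) : ℂ) ^ 2 = 2 := by
    have : Real.sqrt 2 ^ 2 = 2 := Real.sq_sqrt (by norm_num)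
    exact_mod_cast this
  have hu2 : ((Real.sqrt 2 : ℝ) : ℂ)⁻¹ ^ 2 = 2⁻¹ := by
    rw [inv_pow, hw2]
  -- the commutation relation
  have hcomm : ∀ f : ℝ × ℝ → ℂ, ContDiff ℝ ∞ f → ∀ p,
      aMinus hb th B r s (aPlus hb th B r s f) p
        = aPlus hb th B r s (aMinus hb th B r s f) p + f p := by
    intro f hf p
    rw [aPlus_eq hb th B r s f, aMinus_eq hb th B r s f,
      aMinus_eq hb th B r s, aPlus_eq hb th B r s,
      lop_lop hf, lop_lop hf, sndSymm hf p (0, 1) (1, 0)]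
    linear_combination (-2 * Complex.I * ((Real.sqrt 2 : ℝ) : ℂ)⁻¹ ^ 2 * f p) * hc1
      + (2 * f p) * hu2
      + (-2 * ((Real.sqrt 2 : ℝ) : ℂ)⁻¹ ^ 2 * f p) * Complex.I_sq
  -- H in terms of a⁺ a⁻
  have hH : ∀ f : ℝ × ℝ → ℂ, ContDiff ℝ ∞ f → ∀ p,
      Hop hb th B r s f p
        = aPlus hb th B r s (aMinus hb th B r s f) p + (1 / 2 : ℂ) * f p := by
    intro f hf p
    have hmid : aPlus hb th B r s (aMinus hb th B r s f) p
        + aMinus hb th B r s (aPlus hb th B r s f) p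
        = (4 * ((Real.sqrt 2 : ℝ) : ℂ)⁻¹ ^ 2) * Hop hb th B r s f p := by
      simp only [Hop]
      rw [pixT_eq hb th B r s f, piyT_eq hb th B r s f,
        pixT_eq hb th B r s, piyT_eq hb th B r s,
        aMinus_eq hb th B r s f, aPlus_eq hb th B r s f,
        aPlus_eq hb th B r s, aMinus_eq hb th B r s,
        lop_lop hf, lop_lop hf, lop_lop hf, lop_lop hf,
        sndSymm hf p (0, 1) (1, 0)]
      linear_combination (-(4 * ((Real.sqrt 2 : ℝ) : ℂ)⁻¹ ^ 2 * cA hb th B r s * cD hb th B r s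
            * (p.1 : ℂ) * fderiv ℝ f p (0, 1)
          + 2 * ((Real.sqrt 2 : ℝ) : ℂ)⁻¹ ^ 2 * cA hb th B r s ^ 2 * (p.1 : ℂ) ^ 2 * f p
          + 2 * ((Real.sqrt 2 : ℝ) : ℂ)⁻¹ ^ 2 * cD hb th B r s ^ 2
            * fderiv ℝ (fderiv ℝ f) p (0, 1) (0, 1))) * Complex.I_sq
    have e2 := hcomm f hf p
    linear_combination (-(1:ℂ)/2) * hmid + ((1:ℂ)/2) * e2
      + (-2 * Hop hb th B r s f p) * hu2
  -- smoothness of the iterates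
  have hsm : ∀ n : ℕ, ContDiff ℝ ∞ ((aPlus hb th B r s)^[n] ⇑ψ₀) := by
    intro n
    induction n with
    | zero => exact ψ₀.smooth ⊤
    | succ n ih =>
      rw [Function.iterate_succ_apply', aPlus_eq hb th B r s]
      exact lop_contDiff ih _ _ _ _
  -- a⁺ of zero
  have hzero : aPlus hb th B r s 0 = 0 := by
    funext p
    have : fderiv ℝ (0 : ℝ × ℝ → ℂ) = 0 := by
      funext q; exact fderiv_const_apply 0
    simp [aPlus, PixT, PiyT, PixOp, PiyOp, pxOp, pyOp, this]
  -- a⁺ commutes with multiplication by constants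
  have hmul : ∀ (z : ℂ) (g : ℝ × ℝ → ℂ), ContDiff ℝ ∞ g →
      aPlus hb th B r s (fun q => z * g q) = fun p => z * aPlus hb th B r s g p := by
    intro z g hg
    have e1 : ∀ q : ℝ × ℝ, fderiv ℝ (fun q => z * g q) q = z • fderiv ℝ g q := fun q =>
      fderiv_const_mul (hg.differentiable (by simp) q) z
    funext p
    simp only [aPlus, PixT, PiyT, PixOp, PiyOp, pxOp, pyOp, e1,
      ContinuousLinearMap.smul_apply, smul_eq_mul]
    ring
  -- the key invariant: a⁻ of the (n+1)-st iterate
  have hinv : ∀ n : ℕ, aMinus hb th B r s ((aPlus hb th B r s)^[n + 1] ⇑ψ₀)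
      = fun p => ((n : ℂ) + 1) * (aPlus hb th B r s)^[n] ⇑ψ₀ p := by
    intro n
    induction n with
    | zero =>
      funext p
      rw [Function.iterate_one, hcomm ⇑ψ₀ (hsm 0) p]
      simp only [Function.iterate_zero, id_eq] at *
      rw [hground, hzero]
      simp
    | succ n ih =>
      funext p
      rw [Function.iterate_succ_apply', hcomm _ (hsm (n + 1)) p, ih,
        hmul _ _ (hsm n), ← Function.iterate_succ_apply' (aPlus hb th B r s)]
      push_cast
      ring
  intro n
  funext p
  rw [Pi.smul_apply, smul_eq_mul]
  match n with
  | 0 =>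
    rw [hH _ (hsm 0) p]
    simp only [Function.iterate_zero, id_eq, CharP.cast_eq_zero]
    rw [hground, hzero]
    simp
  | Nat.succ m =>
    rw [hH _ (hsm (m + 1)) p, hinv m, hmul _ _ (hsm m),
      ← Function.iterate_succ_apply' (aPlus hb th B r s)]
    push_cast
    ring
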